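/- Let n ≥ 1 and let a_0, …, a_n ∈ ℍ, where a_k has real part a_{k,0} = Re(a_k) and imaginary components a_{k,1}, a_{k,2}, a_{k,3} (so a_k = a_{k,0} + a_{k,1} i + a_{k,2} j + a_{k,3} k). Assume 0 ≤ a_{0,0} ≤ a_{1,0} ≤ ⋯ ≤ a_{n,0} and a_{n,0} ≠ 0. Define p(q) = ∑_{k=0}^{n} q^k · a_k for q ∈ ℍ. Then every quaternion q with p(q) = 0 satisfies ‖q‖ ≤ 1 + (2/a_{n,0}) · ∑_{k=0}^{n} ∑_{ℓ=1}^{3} |a_{k,ℓ}|. -/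

import Mathlib

open Finset

lemma quat_norm_le_sum_abs (x : Quaternion ℝ) :
    ‖x‖ ≤ |x.re| + |x.imI| + |x.imJ| + |x.imK| := by
  have h : ‖x‖ * ‖x‖ = x.re ^ 2 + x.imI ^ 2 + x.imJ ^ 2 + x.imK ^ 2 := by
    rw [← Quaternion.normSq_eq_norm_mul_self, Quaternion.normSq_def']
  nlinarith [norm_nonneg x, abs_nonneg x.re, abs_nonneg x.imI, abs_nonneg x.imJ,
    abs_nonneg x.imK, sq_abs x.re, sq_abs x.imI, sq_abs x.imJ, sq_abs x.imK,
    mul_nonneg (abs_nonneg x.re) (abs_nonneg x.imI),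
    mul_nonneg (abs_nonneg x.re) (abs_nonneg x.imJ),
    mul_nonneg (abs_nonneg x.re) (abs_nonneg x.imK),
    mul_nonneg (abs_nonneg x.imI) (abs_nonneg x.imJ),
    mul_nonneg (abs_nonneg x.imI) (abs_nonneg x.imK),
    mul_nonneg (abs_nonneg x.imJ) (abs_nonneg x.imK)]

lemma quat_re_le_norm (x : Quaternion ℝ) : x.re ≤ ‖x‖ := by
  have h : ‖x‖ * ‖x‖ = x.re ^ 2 + x.imI ^ 2 + x.imJ ^ 2 + x.imK ^ 2 := by
    rw [← Quaternion.normSq_eq_norm_mul_self, Quaternion.normSq_def']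
  nlinarith [norm_nonneg x, sq_nonneg x.imI, sq_nonneg x.imJ, sq_nonneg x.imK]

/-- Theorem 3.10 (quaternionic instance): if the real parts of the coefficients are
nonnegative and nondecreasing with `(a n).re ≠ 0`, then all zeros of `p(q) = ∑ q^k a_k`
lie in the stated ball. -/
theorem enestrom_kakeya_quaternion_real_parts (n : ℕ) (hn : 1 ≤ n)
    (a : ℕ → Quaternion ℝ)
    (h0 : 0 ≤ (a 0).re)
    (hmono : ∀ k < n, (a k).re ≤ (a (k + 1)).re)
    (hne : (a n).re ≠ 0)
    (q : Quaternion ℝ)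
    (hq : ∑ k ∈ Finset.range (n + 1), q ^ k * a k = 0) :
    ‖q‖ ≤ 1 + 2 / (a n).re *
      ∑ k ∈ Finset.range (n + 1), (|(a k).imI| + |(a k).imJ| + |(a k).imK|) := by
  set B : ℕ → ℝ := fun k => |(a k).imI| + |(a k).imJ| + |(a k).imK| with hB
  have hBnonneg : ∀ k, 0 ≤ B k := fun k => by positivity
  have hSB : 0 ≤ ∑ k ∈ Finset.range (n + 1), B k :=
    Finset.sum_nonneg fun k _ => hBnonneg k
  -- real part of a n is positive
  have hmono' : ∀ k ≤ n, (a 0).re ≤ (a k).re := by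
    intro k hk
    induction k with
    | zero => exact le_refl _
    | succ m ih =>
      exact le_trans (ih (le_trans (Nat.le_succ m) hk))
        (hmono m (Nat.lt_of_succ_le hk))
  have han : 0 < (a n).re :=
    lt_of_le_of_ne (le_trans h0 (hmono' n le_rfl)) (Ne.symm hne)
  -- trivial case ‖q‖ ≤ 1
  rcases le_or_gt ‖q‖ 1 with hq1 | hq1
  · have : 0 ≤ 2 / (a n).re * ∑ k ∈ Finset.range (n + 1), B k := by positivity
    linarith
  -- main case
  -- the key algebraic identity
  have hsum2 : ∑ k ∈ Finset.range (n + 1), q ^ (k + 1) * a k = 0 := by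
    have : ∑ k ∈ Finset.range (n + 1), q ^ (k + 1) * a k
        = q * ∑ k ∈ Finset.range (n + 1), q ^ k * a k := by
      rw [Finset.mul_sum]
      refine Finset.sum_congr rfl fun k _ => ?_
      rw [← mul_assoc, ← pow_succ']
    rw [this, hq, mul_zero]
  have key : q ^ (n + 1) * a n
      = a 0 + ∑ k ∈ Finset.range n, q ^ (k + 1) * (a (k + 1) - a k) := by
    have h1 : ∑ k ∈ Finset.range n, q ^ (k + 1) * (a (k + 1) - a k)
        = (∑ k ∈ Finset.range n, q ^ (k + 1) * a (k + 1))
          - ∑ k ∈ Finset.range n, q ^ (k + 1) * a k := by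
      rw [← Finset.sum_sub_distrib]
      exact Finset.sum_congr rfl fun k _ => mul_sub _ _ _
    have h2 : ∑ k ∈ Finset.range n, q ^ (k + 1) * a (k + 1)
        = (∑ k ∈ Finset.range (n + 1), q ^ k * a k) - q ^ 0 * a 0 := by
      rw [Finset.sum_range_succ' (fun k => q ^ k * a k) n, add_sub_cancel_right]
    have h3 : ∑ k ∈ Finset.range n, q ^ (k + 1) * a k
        = (∑ k ∈ Finset.range (n + 1), q ^ (k + 1) * a k) - q ^ (n + 1) * a n := by
      rw [Finset.sum_range_succ (fun k => q ^ (k + 1) * a k) n, add_sub_cancel_right]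
    rw [h1, h2, h3, hq, hsum2]
    simp
  -- take norms
  set r : ℝ := ‖q‖ with hr
  have hr0 : 0 < r := lt_trans one_pos hq1
  have hnorm1 : r ^ (n + 1) * (a n).re ≤ ‖q ^ (n + 1) * a n‖ := by
    rw [norm_mul, norm_pow]
    exact mul_le_mul_of_nonneg_left (quat_re_le_norm (a n)) (by positivity)
  have hnorm2 : ‖q ^ (n + 1) * a n‖
      ≤ ‖a 0‖ + ∑ k ∈ Finset.range n, r ^ (k + 1) * ‖a (k + 1) - a k‖ := by
    rw [key]
    refine le_trans (norm_add_le _ _) (add_le_add_right ?_ _)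
    refine le_trans (norm_sum_le _ _) (le_of_eq ?_)
    exact Finset.sum_congr rfl fun k _ => by rw [norm_mul, norm_pow]
  -- bound each term
  have hterm : ∀ k < n, ‖a (k + 1) - a k‖
      ≤ ((a (k + 1)).re - (a k).re) + (B (k + 1) + B k) := by
    intro k hk
    refine le_trans (quat_norm_le_sum_abs _) ?_
    have hre : |(a (k + 1) - a k).re| = (a (k + 1)).re - (a k).re := by
      rw [Quaternion.re_sub, abs_of_nonneg (sub_nonneg.2 (hmono k hk))]
    rw [hre, Quaternion.imI_sub, Quaternion.imJ_sub, Quaternion.imK_sub]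
    have h1 := abs_sub (a (k + 1)).imI (a k).imI
    have h2 := abs_sub (a (k + 1)).imJ (a k).imJ
    have h3 := abs_sub (a (k + 1)).imK (a k).imK
    simp only [hB]
    linarith
  have ha0 : ‖a 0‖ ≤ (a 0).re + B 0 := by
    refine le_trans (quat_norm_le_sum_abs _) ?_
    rw [abs_of_nonneg h0]
    simp only [hB]
    linarith
  -- r^(k+1) ≤ r^n for k < n, and 1 ≤ r^n
  have hrn : 1 ≤ r ^ n := by
    simpa using pow_le_pow_right₀ hq1.le (Nat.zero_le n)
  set S : ℝ := ∑ k ∈ Finset.range (n + 1), B k with hS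
  have hsum_bound : ‖a 0‖ + ∑ k ∈ Finset.range n, r ^ (k + 1) * ‖a (k + 1) - a k‖
      ≤ r ^ n * ((a n).re + 2 * S) := by
    have h1 : ∀ k ∈ Finset.range n, r ^ (k + 1) * ‖a (k + 1) - a k‖
        ≤ r ^ n * (((a (k + 1)).re - (a k).re) + (B (k + 1) + B k)) := by
      intro k hk
      exact mul_le_mul (pow_le_pow_right₀ hq1.le (Finset.mem_range.1 hk))
        (hterm k (Finset.mem_range.1 hk)) (norm_nonneg _) (pow_nonneg hr0.le n)
    have h2 : ∑ k ∈ Finset.range n, r ^ (k + 1) * ‖a (k + 1) - a k‖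
        ≤ r ^ n * ∑ k ∈ Finset.range n,
            (((a (k + 1)).re - (a k).re) + (B (k + 1) + B k)) := by
      rw [Finset.mul_sum]
      exact Finset.sum_le_sum h1
    have h3 : ∑ k ∈ Finset.range n, (((a (k + 1)).re - (a k).re) + (B (k + 1) + B k))
        = ((a n).re - (a 0).re) + ((S - B 0) + (S - B n)) := by
      rw [Finset.sum_add_distrib, Finset.sum_add_distrib,
        Finset.sum_range_sub (fun k => (a k).re) n]
      congr 1
      congr 1
      · have := Finset.sum_range_succ' B n
        rw [hS]
        linarith [this]
      · have := Finset.sum_range_succ B n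
        rw [hS]
        linarith [this]
    have h4 : ‖a 0‖ ≤ r ^ n * ((a 0).re + B 0) := by
      refine le_trans ha0 ?_
      nlinarith [hBnonneg 0]
    have h5 : r ^ n * ((a 0).re + B 0)
        + r ^ n * (((a n).re - (a 0).re) + ((S - B 0) + (S - B n)))
        ≤ r ^ n * ((a n).re + 2 * S) := by
      have : ((a 0).re + B 0) + (((a n).re - (a 0).re) + ((S - B 0) + (S - B n)))
          ≤ (a n).re + 2 * S := by linarith [hBnonneg n]
      nlinarith [pow_nonneg hr0.le n]
    calc ‖a 0‖ + ∑ k ∈ Finset.range n, r ^ (k + 1) * ‖a (k + 1) - a k‖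
        ≤ r ^ n * ((a 0).re + B 0)
          + r ^ n * (((a n).re - (a 0).re) + ((S - B 0) + (S - B n))) := by
          rw [← h3]; exact add_le_add h4 h2
      _ ≤ r ^ n * ((a n).re + 2 * S) := h5
  have main : r ^ (n + 1) * (a n).re ≤ r ^ n * ((a n).re + 2 * S) :=
    le_trans hnorm1 (le_trans hnorm2 hsum_bound)
  have hrmul : r * (a n).re ≤ (a n).re + 2 * S := by
    have hpp : 0 < r ^ n := pow_pos hr0 n
    have : r ^ n * (r * (a n).re) ≤ r ^ n * ((a n).re + 2 * S) := by
      calc r ^ n * (r * (a n).re) = r ^ (n + 1) * (a n).re := by ring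
        _ ≤ r ^ n * ((a n).re + 2 * S) := main
    exact le_of_mul_le_mul_left this hpp
  have : r ≤ ((a n).re + 2 * S) / (a n).re := (le_div_iff₀ han).2 hrmul
  calc r ≤ ((a n).re + 2 * S) / (a n).re := this
    _ = 1 + 2 / (a n).re * S := by field_simp
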